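/- In a connected block graph G with blocks B_1,…,B_r, a set A ⊆ V(G) is a center set (i.e., A = C_S(G) for some nonempty S ⊆ V(G)) if and only if A is a singleton {v} for some vertex v, or A = V(B_i) for some block B_i. -/

import Mathlib

/-- The `S`-eccentricity of a vertex `v`. -/
noncomputable def sEcc {V : Type*} (G : SimpleGraph V) (S : Finset V) (v : V) : ℕ :=
  S.sup fun x => G.dist v x

/-- The `S`-center of `G`. -/
noncomputable def sCenter {V : Type*} (G : SimpleGraph V) (S : Finset V) : Set V :=
  {v | ∀ w, sEcc G S v ≤ sEcc G S w}

/-- `A` is a center set of `G` if it is the `S`-center for some nonempty set `S`. -/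
def IsCenterSet {V : Type*} (G : SimpleGraph V) (A : Set V) : Prop :=
  ∃ S : Finset V, S.Nonempty ∧ sCenter G S = A

/-- `B` induces a connected subgraph of `G` without a cut-vertex. -/
def IsCutFree {V : Type*} (G : SimpleGraph V) (B : Set V) : Prop :=
  B.Nonempty ∧ (G.induce B).Connected ∧ ∀ v ∈ B, (G.induce (B \ {v})).Preconnected

/-- A block of `G`: a maximal set of vertices inducing a connected subgraph with no
cut-vertex. -/
def IsBlock {V : Type*} (G : SimpleGraph V) (B : Set V) : Prop :=
  IsCutFree G B ∧ ∀ B', B ⊆ B' → IsCutFree G B' → B' = B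

open SimpleGraph

section helpers

variable {V : Type*} [DecidableEq V] {G : SimpleGraph V}

private theorem reachInduce {T : Set V} :
    ∀ {a b : V} (p : G.Walk a b), (∀ x ∈ p.support, x ∈ T) → ∀ (ha : a ∈ T) (hb : b ∈ T),
      (G.induce T).Reachable ⟨a, ha⟩ ⟨b, hb⟩
  | _, _, Walk.nil, _, _, _ => Reachable.refl _
  | a, b, Walk.cons (v := y) h q, hp, ha, hb => by
      have hy : y ∈ T := hp _ (by simp [Walk.support_cons])
      have hadj : (G.induce T).Adj ⟨a, ha⟩ ⟨y, hy⟩ := by simpa using h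
      exact hadj.reachable.trans
        (reachInduce q (fun t ht => hp t (by simp [Walk.support_cons, ht])) hy hb)

private theorem preconnected_hub {T : Set V} {h0 : V} (hh : h0 ∈ T)
    (H : ∀ a ∈ T, ∃ p : G.Walk a h0, ∀ x ∈ p.support, x ∈ T) :
    (G.induce T).Preconnected := by
  rintro ⟨a, ha⟩ ⟨b, hb⟩
  obtain ⟨p, hp⟩ := H a ha
  obtain ⟨q, hq⟩ := H b hb
  exact (reachInduce p hp ha hh).trans (reachInduce q hq hb hh).symm

private theorem notMem_take_or_drop {u v : V} (P : G.Walk u v)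
    (hP : P.IsPath) {a z : V} (ha : a ∈ P.support) (hz : z ≠ a) :
    z ∉ (P.takeUntil a ha).support ∨ z ∉ (P.dropUntil a ha).support := by
  by_contra hc
  push_neg at hc
  obtain ⟨h1, h2⟩ := hc
  have hnd := hP.support_nodup
  rw [← P.take_spec ha, Walk.support_append, List.nodup_append] at hnd
  have h2' : z ∈ (P.dropUntil a ha).support.tail := by
    rw [(P.dropUntil a ha).support_eq_cons] at h2
    rcases List.mem_cons.mp h2 with h | h
    · exact absurd h hz
    · exact h
  exact hnd.2.2 _ h1 _ h2' rfl

private theorem start_notMem_drop {u v : V} (P : G.Walk u v) (hP : P.IsPath)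
    {a : V} (ha : a ∈ P.support) (hau : a ≠ u) : u ∉ (P.dropUntil a ha).support := by
  intro hmem
  have hnd := hP.support_nodup
  rw [← P.take_spec ha, Walk.support_append, List.nodup_append] at hnd
  have h2' : u ∈ (P.dropUntil a ha).support.tail := by
    rw [(P.dropUntil a ha).support_eq_cons] at hmem
    rcases List.mem_cons.mp hmem with h | h
    · exact absurd h.symm hau
    · exact h
  exact hnd.2.2 _ (P.takeUntil a ha).start_mem_support _ h2' rfl

private theorem end_notMem_take {u v : V} (P : G.Walk u v) (hP : P.IsPath)
    {a : V} (ha : a ∈ P.support) (hav : a ≠ v) : v ∉ (P.takeUntil a ha).support := by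
  intro hmem
  have hnd := hP.support_nodup
  rw [← P.take_spec ha, Walk.support_append, List.nodup_append] at hnd
  have h2 : v ∈ (P.dropUntil a ha).support := (P.dropUntil a ha).end_mem_support
  rw [(P.dropUntil a ha).support_eq_cons] at h2
  rcases List.mem_cons.mp h2 with h | h
  · exact hav h.symm
  · exact hnd.2.2 _ hmem _ h rfl

end helpers
set_option linter.unusedSectionVars false

section helpers2

variable {V : Type*} [DecidableEq V] {G : SimpleGraph V}

private theorem cutFree_of_complete {W : Set V} (hne : W.Nonempty)
    (hc : ∀ a ∈ W, ∀ b ∈ W, a ≠ b → G.Adj a b) : IsCutFree G W := by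
  have key : ∀ (T : Set V), (∀ a ∈ T, ∀ b ∈ T, a ≠ b → G.Adj a b) →
      (G.induce T).Preconnected := by
    intro T hT
    rintro ⟨a, ha⟩ ⟨b, hb⟩
    by_cases hab : a = b
    · subst hab; exact Reachable.refl _
    · have : (G.induce T).Adj ⟨a, ha⟩ ⟨b, hb⟩ := by simpa using hT a ha b hb hab
      exact this.reachable
  refine ⟨hne, (SimpleGraph.connected_iff _).mpr ⟨key W hc, ⟨⟨hne.choose, hne.choose_spec⟩⟩⟩, ?_⟩
  intro v _
  exact key _ fun a ha b hb hab => hc a ha.1 b hb.1 hab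

private theorem exists_block_aux [Fintype V] :
    ∀ (n : ℕ) (W : Set V), Fintype.card V ≤ W.ncard + n → IsCutFree G W →
      ∃ B, IsBlock G B ∧ W ⊆ B := by
  intro n
  induction n with
  | zero =>
    intro W hcard hW
    refine ⟨W, ⟨hW, fun B' hsub hcf => ?_⟩, subset_rfl⟩
    refine (Set.eq_of_subset_of_ncard_le hsub ?_ (Set.toFinite B')).symm
    calc B'.ncard ≤ (Set.univ : Set V).ncard := Set.ncard_le_ncard (Set.subset_univ _)
      _ = Fintype.card V := by rw [Set.ncard_univ, Nat.card_eq_fintype_card]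
      _ ≤ W.ncard + 0 := hcard
      _ = W.ncard := by omega
  | succ n ih =>
    intro W hcard hW
    by_cases hmax : ∀ B', W ⊆ B' → IsCutFree G B' → B' = W
    · exact ⟨W, ⟨hW, hmax⟩, subset_rfl⟩
    · push_neg at hmax
      obtain ⟨B', hsub, hcf, hne⟩ := hmax
      have hlt : W.ncard < B'.ncard :=
        Set.ncard_lt_ncard (Set.ssubset_iff_subset_ne.mpr ⟨hsub, fun h => hne h.symm⟩)
          (Set.toFinite B')
      obtain ⟨B, hB, hsub'⟩ := ih B' (by omega) hcf
      exact ⟨B, hB, hsub.trans hsub'⟩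

private theorem exists_block [Fintype V] {W : Set V} (hW : IsCutFree G W) :
    ∃ B, IsBlock G B ∧ W ⊆ B :=
  exists_block_aux (Fintype.card V) W (by omega) hW

/-- From a path `P` and an avoided vertex `z` not in `Q`, connect any `a ∈ P.support` to `u`
within `P ∪ Q` avoiding `z`. -/
private theorem avoid_connect {u v : V} {P Q : G.Walk u v} (hP : P.IsPath)
    {z a : V} (hzu : z ≠ u) (hzv : z ≠ v) (hzQ : z ∉ Q.support)
    (ha : a ∈ P.support) (haz : a ≠ z) :
    ∃ p : G.Walk a u, (∀ x ∈ p.support, x ∈ P.support ∨ x ∈ Q.support) ∧ z ∉ p.support := by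
  by_cases hzP : z ∈ P.support
  · rcases notMem_take_or_drop P hP ha (fun h => haz h.symm) with h | h
    · refine ⟨(P.takeUntil a ha).reverse, fun x hx => ?_, fun hx => h ?_⟩
      · rw [Walk.support_reverse, List.mem_reverse] at hx
        exact Or.inl (P.support_takeUntil_subset ha hx)
      · rwa [Walk.support_reverse, List.mem_reverse] at hx
    · refine ⟨(P.dropUntil a ha).append Q.reverse, fun x hx => ?_, fun hx => ?_⟩
      · rw [Walk.mem_support_append_iff] at hx
        rcases hx with hx | hx
        · exact Or.inl (P.support_dropUntil_subset ha hx)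
        · rw [Walk.support_reverse, List.mem_reverse] at hx
          exact Or.inr hx
      · rw [Walk.mem_support_append_iff] at hx
        rcases hx with hx | hx
        · exact h hx
        · rw [Walk.support_reverse, List.mem_reverse] at hx
          exact hzQ hx
  · refine ⟨(P.takeUntil a ha).reverse, fun x hx => ?_, fun hx => hzP ?_⟩
    · rw [Walk.support_reverse, List.mem_reverse] at hx
      exact Or.inl (P.support_takeUntil_subset ha hx)
    · rw [Walk.support_reverse, List.mem_reverse] at hx
      exact P.support_takeUntil_subset ha hx

/-- Two internally disjoint paths between distinct vertices of a block graph force adjacency. -/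
private theorem star_lemma [Fintype V]
    (hblock : ∀ B : Set V, IsBlock G B → ∀ u ∈ B, ∀ v ∈ B, u ≠ v → G.Adj u v)
    {u v : V} (huv : u ≠ v) {P Q : G.Walk u v} (hP : P.IsPath) (hQ : Q.IsPath)
    (hdisj : ∀ z, z ∈ P.support → z ∈ Q.support → z = u ∨ z = v) : G.Adj u v := by
  set W : Set V := {x | x ∈ P.support ∨ x ∈ Q.support} with hW
  have huW : u ∈ W := Or.inl P.start_mem_support
  have hvW : v ∈ W := Or.inl P.end_mem_support
  have hcut : IsCutFree G W := by
    refine ⟨⟨u, huW⟩, (SimpleGraph.connected_iff _).mpr ⟨preconnected_hub huW ?_, ⟨⟨u, huW⟩⟩⟩, ?_⟩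
    · rintro a (ha | ha)
      · exact ⟨(P.takeUntil a ha).reverse, fun x hx => by
          rw [Walk.support_reverse, List.mem_reverse] at hx
          exact Or.inl (P.support_takeUntil_subset ha hx)⟩
      · exact ⟨(Q.takeUntil a ha).reverse, fun x hx => by
          rw [Walk.support_reverse, List.mem_reverse] at hx
          exact Or.inr (Q.support_takeUntil_subset ha hx)⟩
    · intro z hzW
      by_cases hzu : z = u
      · subst hzu
        -- hub v, use dropUntil
        refine preconnected_hub (h0 := v) ⟨hvW, by simpa using huv.symm⟩ ?_
        rintro a ⟨(ha | ha), haz⟩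
        · refine ⟨P.dropUntil a ha, fun x hx => ⟨?_, ?_⟩⟩
          · exact Or.inl (P.support_dropUntil_subset ha hx)
          · intro hxz; subst hxz
            exact start_notMem_drop P hP ha (by simpa using haz) hx
        · refine ⟨Q.dropUntil a ha, fun x hx => ⟨?_, ?_⟩⟩
          · exact Or.inr (Q.support_dropUntil_subset ha hx)
          · intro hxz; subst hxz
            exact start_notMem_drop Q hQ ha (by simpa using haz) hx
      · by_cases hzv : z = v
        · subst hzv
          refine preconnected_hub (h0 := u) ⟨huW, fun h => hzu (by simpa using h.symm)⟩ ?_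
          rintro a ⟨(ha | ha), haz⟩
          · refine ⟨(P.takeUntil a ha).reverse, fun x hx => ?_⟩
            rw [Walk.support_reverse, List.mem_reverse] at hx
            refine ⟨Or.inl (P.support_takeUntil_subset ha hx), fun hxz => ?_⟩
            subst hxz
            exact end_notMem_take P hP ha (by simpa using haz) hx
          · refine ⟨(Q.takeUntil a ha).reverse, fun x hx => ?_⟩
            rw [Walk.support_reverse, List.mem_reverse] at hx
            refine ⟨Or.inr (Q.support_takeUntil_subset ha hx), fun hxz => ?_⟩
            subst hxz
            exact end_notMem_take Q hQ ha (by simpa using haz) hx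
        · -- z is internal: z in at most one of P, Q
          refine preconnected_hub (h0 := u) ⟨huW, fun h => hzu (by simpa using h.symm)⟩ ?_
          have hz1 : z ∉ P.support ∨ z ∉ Q.support := by
            by_contra hc
            push_neg at hc
            rcases hdisj z hc.1 hc.2 with h | h
            · exact hzu h
            · exact hzv h
          rintro a ⟨(ha | ha), haz⟩
          · rcases hz1 with hzP | hzQ
            · refine ⟨(P.takeUntil a ha).reverse, fun x hx => ?_⟩
              rw [Walk.support_reverse, List.mem_reverse] at hx
              exact ⟨Or.inl (P.support_takeUntil_subset ha hx),
                fun hxz => hzP (hxz ▸ P.support_takeUntil_subset ha hx)⟩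
            · obtain ⟨p, hp1, hp2⟩ := avoid_connect hP hzu hzv hzQ ha
                (fun h => (by simpa using haz : a ≠ z) h)
              exact ⟨p, fun x hx => ⟨hp1 x hx, fun hxz => hp2 (hxz ▸ hx)⟩⟩
          · rcases hz1 with hzP | hzQ
            · obtain ⟨p, hp1, hp2⟩ := avoid_connect (P := Q) (Q := P) hQ hzu hzv hzP ha
                (fun h => (by simpa using haz : a ≠ z) h)
              exact ⟨p, fun x hx => ⟨(hp1 x hx).symm, fun hxz => hp2 (hxz ▸ hx)⟩⟩
            · refine ⟨(Q.takeUntil a ha).reverse, fun x hx => ?_⟩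
              rw [Walk.support_reverse, List.mem_reverse] at hx
              exact ⟨Or.inr (Q.support_takeUntil_subset ha hx),
                fun hxz => hzQ (hxz ▸ Q.support_takeUntil_subset ha hx)⟩
  obtain ⟨B, hB, hsub⟩ := exists_block hcut
  exact hblock B hB u (hsub huW) v (hsub hvW) huv

end helpers2
section helpers3

variable {V : Type*} [DecidableEq V] {G : SimpleGraph V}

private theorem dist_add_of_mem (hG : G.Connected) {u v z : V} (p : G.Walk u v)
    (hp : p.length = G.dist u v) (hz : z ∈ p.support) :
    G.dist u z + G.dist z v = G.dist u v := by
  have hsplit : (p.takeUntil z hz).length + (p.dropUntil z hz).length = p.length := by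
    have := congrArg Walk.length (p.take_spec hz)
    rwa [Walk.length_append] at this
  refine le_antisymm ?_ (hG.dist_triangle)
  calc G.dist u z + G.dist z v ≤ (p.takeUntil z hz).length + (p.dropUntil z hz).length :=
        Nat.add_le_add (SimpleGraph.dist_le _) (SimpleGraph.dist_le _)
    _ = p.length := hsplit
    _ = G.dist u v := hp

private theorem dist_le_one_of_adj {u v : V} (h : G.Adj u v) : G.dist u v ≤ 1 := by
  have := SimpleGraph.dist_le (Walk.cons h Walk.nil)
  simpa using this

/-- Key lemma S: if `w` is the neighbour of `u` towards `v` (at distance ≥ 2) and `x` is not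
closer to `w` than to `u`, then `x` is strictly farther from `v` than from `w`. -/
private theorem lemS [Fintype V] (hG : G.Connected)
    (hblock : ∀ B : Set V, IsBlock G B → ∀ u ∈ B, ∀ v ∈ B, u ≠ v → G.Adj u v) :
    ∀ d : ℕ, ∀ u w v x : V, G.Adj u w → G.dist u v = d → 2 ≤ d → G.dist w v = d - 1 →
      G.dist u x ≤ G.dist w x → G.dist w x < G.dist v x := by
  intro d
  induction d using Nat.strong_induction_on with
  | _ d IH =>
  intro u w v x hadj hduv hd2 hdwv hux
  by_contra hcon
  push_neg at hcon
  -- hcon : dist v x ≤ dist w x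
  have huv : u ≠ v := fun h => by subst h; rw [SimpleGraph.dist_self] at hduv; omega
  obtain ⟨R, hR⟩ := hG.exists_walk_length_eq_dist w v
  obtain ⟨A0, hA0⟩ := hG.exists_walk_length_eq_dist u x
  obtain ⟨C0, hC0⟩ := hG.exists_walk_length_eq_dist v x
  have hA : A0.length = G.dist u x := hA0
  set P1 := (Walk.cons hadj R).bypass with hP1def
  set P2 := (A0.append C0.reverse).bypass with hP2def
  have hkey : ∀ z, z ∈ P1.support → z ∈ P2.support → z = u ∨ z = v := by
    intro z hz1 hz2
    have hz1' : z = u ∨ z ∈ R.support := by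
      have := Walk.support_bypass_subset _ hz1
      rw [Walk.support_cons] at this
      exact List.mem_cons.mp this
    rcases hz1' with rfl | hzR
    · exact Or.inl rfl
    have hsum : G.dist w z + G.dist z v = G.dist w v := dist_add_of_mem hG R hR hzR
    have htriv : G.dist u v ≤ G.dist u z + G.dist z v := hG.dist_triangle
    have htri2 : G.dist u z ≤ G.dist u w + G.dist w z := hG.dist_triangle
    have hduw : G.dist u w ≤ 1 := dist_le_one_of_adj hadj
    -- derive dist u z = dist w z + 1 and dist z v = d - 1 - dist w z
    have huz : G.dist u z = G.dist w z + 1 ∧ G.dist z v + G.dist w z + 1 = d := by omega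
    have hz2' : z ∈ A0.support ∨ z ∈ C0.support := by
      have := Walk.support_bypass_subset _ hz2
      rw [Walk.mem_support_append_iff] at this
      rcases this with h | h
      · exact Or.inl h
      · rw [Walk.support_reverse, List.mem_reverse] at h
        exact Or.inr h
    rcases hz2' with hzA | hzC
    · -- contradiction
      exfalso
      have hsumA : G.dist u z + G.dist z x = G.dist u x := dist_add_of_mem hG A0 hA0 hzA
      have : G.dist w x ≤ G.dist w z + G.dist z x := hG.dist_triangle
      omega
    · have hsumC : G.dist v z + G.dist z x = G.dist v x := dist_add_of_mem hG C0 hC0 hzC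
      have hzv' : G.dist z v = G.dist v z := SimpleGraph.dist_comm
      by_cases hwz0 : G.dist w z = 0
      · -- z = w
        exfalso
        have : w = z := (hG.dist_eq_zero_iff).mp hwz0
        subst this
        -- dist v w + dist w x = dist v x ≤ dist w x, dist v w = d - 1 ≥ 1
        have : G.dist v w = d - 1 := by rw [SimpleGraph.dist_comm]; exact hdwv
        omega
      · -- apply IH with a := dist u z
        by_cases hzvz : G.dist z v = 0
        · exact Or.inr ((hG.dist_eq_zero_iff).mp hzvz)
        exfalso
        have ha2 : 2 ≤ G.dist u z := by omega
        have halt : G.dist u z < d := by omega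
        have := IH (G.dist u z) halt u w z x hadj rfl ha2 (by omega) hux
        -- dist w x < dist z x, but dist z x ≤ dist v x ≤ dist w x
        omega
  have hP2ends : G.Adj u v := by
    refine star_lemma hblock huv (Walk.bypass_isPath _) (Walk.bypass_isPath _) hkey
  have := dist_le_one_of_adj hP2ends
  omega

/-- Key lemma T: in a triangle `u v w`, if `x` is at distance `m` from both `u` and `v`,
it is at distance at most `m` from `w`. -/
private theorem lemT [Fintype V] (hG : G.Connected)
    (hblock : ∀ B : Set V, IsBlock G B → ∀ u ∈ B, ∀ v ∈ B, u ≠ v → G.Adj u v) :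
    ∀ m : ℕ, ∀ u v w x : V, G.Adj u v → G.Adj u w → G.Adj v w → G.dist u x = m →
      G.dist v x = m → G.dist w x ≤ m := by
  intro m
  induction m using Nat.strong_induction_on with
  | _ m IH =>
  intro u v w x huv huw hvw hux hvx
  by_contra hcon
  push_neg at hcon
  have hwx : G.dist w x = m + 1 := by
    have h1 : G.dist w x ≤ G.dist w u + G.dist u x := hG.dist_triangle
    have h2 : G.dist w u ≤ 1 := dist_le_one_of_adj huw.symm
    omega
  have hm1 : 1 ≤ m := by
    by_contra hm
    push_neg at hm
    interval_cases m
    have h1 : u = x := (hG.dist_eq_zero_iff).mp hux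
    have h2 : v = x := (hG.dist_eq_zero_iff).mp hvx
    exact G.ne_of_adj huv (h1.trans h2.symm)
  obtain ⟨A0, hA0⟩ := hG.exists_walk_length_eq_dist u x
  obtain ⟨C0, hC0⟩ := hG.exists_walk_length_eq_dist v x
  set A := A0.bypass with hAdef
  set C := C0.bypass with hCdef
  have hA : A.length = G.dist u x :=
    le_antisymm (le_trans (Walk.length_bypass_le _) (le_of_eq hA0)) (SimpleGraph.dist_le _)
  have hC : C.length = G.dist v x :=
    le_antisymm (le_trans (Walk.length_bypass_le _) (le_of_eq hC0)) (SimpleGraph.dist_le _)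
  have hwA : w ∉ A.support := by
    intro h
    have := dist_add_of_mem hG A hA h
    have h2 : G.dist w x ≤ G.dist u x := by omega
    omega
  have hwC : w ∉ C.support := by
    intro h
    have := dist_add_of_mem hG C hC h
    omega
  by_cases hmid : ∃ z, z ∈ A.support ∧ z ∈ C.support ∧ z ≠ x
  · obtain ⟨z, hzA, hzC, hzx⟩ := hmid
    have h1 : G.dist u z + G.dist z x = G.dist u x := dist_add_of_mem hG A hA hzA
    have h2 : G.dist v z + G.dist z x = G.dist v x := dist_add_of_mem hG C hC hzC
    have ht1 : 1 ≤ G.dist z x := by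
      rcases Nat.eq_zero_or_pos (G.dist z x) with h | h
      · exact absurd ((hG.dist_eq_zero_iff).mp h) hzx
      · exact h
    have hm' : G.dist u z = G.dist v z := by omega
    have hm'0 : 1 ≤ G.dist u z := by
      rcases Nat.eq_zero_or_pos (G.dist u z) with h | h
      · exfalso
        have hu : u = z := (hG.dist_eq_zero_iff).mp h
        have hv : v = z := (hG.dist_eq_zero_iff).mp (by omega)
        exact G.ne_of_adj huv (hu.trans hv.symm)
      · exact h
    have hIH := IH (G.dist u z) (by omega) u v w z huv huw hvw rfl hm'.symm
    have : G.dist w x ≤ G.dist w z + G.dist z x := hG.dist_triangle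
    omega
  · push_neg at hmid
    have hne : w ≠ x := fun h => by rw [h, SimpleGraph.dist_self] at hwx; omega
    set P1 : G.Walk w x := Walk.cons huw.symm A with hP1def
    set P2 : G.Walk w x := Walk.cons hvw.symm C with hP2def
    have hP1path : P1.IsPath := (Walk.bypass_isPath A0).cons hwA
    have hP2path : P2.IsPath := (Walk.bypass_isPath C0).cons hwC
    have hdisj : ∀ z, z ∈ P1.support → z ∈ P2.support → z = w ∨ z = x := by
      intro z hz1 hz2
      rw [hP1def, Walk.support_cons] at hz1
      rw [hP2def, Walk.support_cons] at hz2
      rcases List.mem_cons.mp hz1 with rfl | hz1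
      · exact Or.inl rfl
      rcases List.mem_cons.mp hz2 with rfl | hz2
      · exact Or.inl rfl
      · exact Or.inr (hmid z hz1 hz2)
    have hadjwx : G.Adj w x := star_lemma hblock hne hP1path hP2path hdisj
    have := dist_le_one_of_adj hadjwx
    omega

end helpers3
/-- In a connected block graph (every block is complete), the center sets are exactly the
singletons and the vertex sets of the blocks. -/
theorem centerSets_of_blockGraph {V : Type*} [Fintype V] (G : SimpleGraph V)
    (hG : G.Connected)
    (hblock : ∀ B : Set V, IsBlock G B → ∀ u ∈ B, ∀ v ∈ B, u ≠ v → G.Adj u v)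
    (A : Set V) :
    IsCenterSet G A ↔ (∃ v : V, A = {v}) ∨ (∃ B : Set V, IsBlock G B ∧ A = B) := by
  classical
  constructor
  · rintro ⟨S, hSne, rfl⟩
    obtain ⟨x0, hx0⟩ := hSne
    set f : V → ℕ := sEcc G S with hfdef
    obtain ⟨v0, -, hv0⟩ := Finset.exists_min_image Finset.univ f ⟨x0, Finset.mem_univ x0⟩
    have hv0c : v0 ∈ sCenter G S := fun w => hv0 w (Finset.mem_univ w)
    by_cases hsing : ∀ a ∈ sCenter G S, ∀ b ∈ sCenter G S, a = b
    · left
      refine ⟨v0, Set.eq_singleton_iff_unique_mem.mpr ⟨hv0c, fun a ha => hsing a ha v0 hv0c⟩⟩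
    · right
      push_neg at hsing
      obtain ⟨u, hu, v, hv, huvne⟩ := hsing
      -- basic facts about center
      have hfm : ∀ a ∈ sCenter G S, ∀ b ∈ sCenter G S, f a = f b := fun a ha b hb =>
        le_antisymm (ha b) (hb a)
      have hle : ∀ a ∈ sCenter G S, ∀ x ∈ S, G.dist a x ≤ f a := fun a _ x hx =>
        Finset.le_sup (f := fun x => G.dist a x) hx
      have hfpos : 1 ≤ f u := by
        by_contra h
        push_neg at h
        have h1 : G.dist u x0 = 0 := by have := hle u hu x0 hx0; omega
        have h2 : G.dist v x0 = 0 := by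
          have := hle v hv x0 hx0
          have := hfm u hu v hv
          omega
        exact huvne (((hG.dist_eq_zero_iff).mp h1).trans ((hG.dist_eq_zero_iff).mp h2).symm)
      -- Step 1: the center is a clique
      have key1 : ∀ a ∈ sCenter G S, ∀ b ∈ sCenter G S, a ≠ b → G.Adj a b := by
        intro a ha b hb hab
        by_contra hnadj
        have hd0 : G.dist a b ≠ 0 := fun h => hab ((hG.dist_eq_zero_iff).mp h)
        have hd1 : G.dist a b ≠ 1 := fun h => hnadj (SimpleGraph.dist_eq_one_iff_adj.mp h)
        have hd2 : 2 ≤ G.dist a b := by omega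
        obtain ⟨p0, hp0⟩ := hG.exists_walk_length_eq_dist a b
        cases p0 with
        | nil => rw [← hp0] at hd2; simp at hd2
        | @cons _ w _ h q =>
          have hwmem : w ∈ (Walk.cons h q).support := by
            rw [Walk.support_cons]
            exact List.mem_cons_of_mem _ q.start_mem_support
          have hsum : G.dist a w + G.dist w b = G.dist a b :=
            dist_add_of_mem hG _ hp0 hwmem
          have haw1 : G.dist a w ≤ 1 := dist_le_one_of_adj h
          have haw0 : G.dist a w ≠ 0 := fun h0 => G.ne_of_adj h ((hG.dist_eq_zero_iff).mp h0)
          have hfab : f a = f b := hfm a ha b hb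
          have hfapos : 1 ≤ f a := by
            have := hfm u hu a ha; omega
          have hfw : f w ≤ f a - 1 := by
            refine Finset.sup_le fun x hx => ?_
            have hax : G.dist a x ≤ f a := hle a ha x hx
            have hbx : G.dist b x ≤ f a := by have := hle b hb x hx; omega
            by_cases hcase : G.dist w x < G.dist a x
            · omega
            · push_neg at hcase
              have := lemS hG hblock (G.dist a b) a w b x h rfl hd2 (by omega) hcase
              omega
          have h5 : f a ≤ f w := ha w
          omega
      -- Step 2: extend the center to a block
      have hCcut : IsCutFree G (sCenter G S) := cutFree_of_complete ⟨v0, hv0c⟩ key1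
      obtain ⟨B, hBblock, hCB⟩ := exists_block hCcut
      refine ⟨B, hBblock, ?_⟩
      refine (Set.Subset.antisymm ?_ hCB).symm
      intro w hwB
      by_cases hwC : w ∈ sCenter G S
      · exact hwC
      · exfalso
        have hwu : w ≠ u := fun h => hwC (h ▸ hu)
        have hwv : w ≠ v := fun h => hwC (h ▸ hv)
        have hadjuv : G.Adj u v := key1 u hu v hv huvne
        have hadjuw : G.Adj u w := hblock B hBblock u (hCB hu) w hwB (Ne.symm hwu)
        have hadjvw : G.Adj v w := hblock B hBblock v (hCB hv) w hwB (Ne.symm hwv)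
        have hfuv : f u = f v := hfm u hu v hv
        have hfw : f w ≤ f u := by
          refine Finset.sup_le fun x hx => ?_
          have hux : G.dist u x ≤ f u := hle u hu x hx
          have hvx : G.dist v x ≤ f u := by have := hle v hv x hx; omega
          by_contra hbig
          push_neg at hbig
          have h1 : G.dist w x ≤ G.dist w u + G.dist u x := hG.dist_triangle
          have h2 : G.dist w u ≤ 1 := dist_le_one_of_adj hadjuw.symm
          have h3 : G.dist w x ≤ G.dist w v + G.dist v x := hG.dist_triangle
          have h4 : G.dist w v ≤ 1 := dist_le_one_of_adj hadjvw.symm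
          have hux' : G.dist u x = f u := by omega
          have hvx' : G.dist v x = f u := by omega
          have := lemT hG hblock (f u) u v w x hadjuv hadjuw hadjvw hux' hvx'
          omega
        exact hwC fun y => le_trans hfw (hu y)
  · rintro (⟨v, rfl⟩ | ⟨B, hB, hAB⟩)
    · -- singleton
      refine ⟨{v}, Finset.singleton_nonempty v, ?_⟩
      have hecc : ∀ w, sEcc G {v} w = G.dist w v := fun w => Finset.sup_singleton
      ext w
      simp only [sCenter, Set.mem_setOf_eq, Set.mem_singleton_iff]
      constructor
      · intro hwc
        have := hwc v
        rw [hecc, hecc, SimpleGraph.dist_self] at this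
        exact (hG.dist_eq_zero_iff).mp (Nat.le_zero.mp this)
      · rintro rfl y
        rw [hecc, hecc, SimpleGraph.dist_self]
        omega
    · -- block
      rw [hAB]
      have hBne : B.Nonempty := hB.1.1
      by_cases hsing : ∃ b, B = {b}
      · obtain ⟨b, rfl⟩ := hsing
        refine ⟨{b}, Finset.singleton_nonempty b, ?_⟩
        have hecc : ∀ w, sEcc G {b} w = G.dist w b := fun w => Finset.sup_singleton
        ext w
        simp only [sCenter, Set.mem_setOf_eq, Set.mem_singleton_iff]
        constructor
        · intro hwc
          have := hwc b
          rw [hecc, hecc, SimpleGraph.dist_self] at this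
          exact (hG.dist_eq_zero_iff).mp (Nat.le_zero.mp this)
        · rintro rfl y
          rw [hecc, hecc, SimpleGraph.dist_self]
          omega
      · -- B has at least two elements
        push_neg at hsing
        obtain ⟨b1, hb1⟩ := hBne
        obtain ⟨b2, hb2, hb12⟩ : ∃ b2 ∈ B, b2 ≠ b1 := by
          by_contra h
          push_neg at h
          exact hsing b1 (Set.eq_singleton_iff_unique_mem.mpr ⟨hb1, h⟩)
        have hcompl : ∀ a ∈ B, ∀ b ∈ B, a ≠ b → G.Adj a b := hblock B hB
        refine ⟨(Set.toFinite B).toFinset, ?_, ?_⟩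
        · rw [Set.Finite.toFinset_nonempty]; exact ⟨b1, hb1⟩
        have heccB : ∀ w ∈ B, sEcc G (Set.toFinite B).toFinset w = 1 := by
          intro w hw
          refine le_antisymm ?_ ?_
          · refine Finset.sup_le fun x hx => ?_
            rw [Set.Finite.mem_toFinset] at hx
            by_cases hwx : w = x
            · subst hwx; rw [SimpleGraph.dist_self]; omega
            · exact dist_le_one_of_adj (hcompl w hw x hx hwx)
          · rcases eq_or_ne w b1 with rfl | hne
            · have h6 : G.dist w b2 ≤ sEcc G (Set.toFinite B).toFinset w :=
                Finset.le_sup (f := fun x => G.dist w x)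
                  (((Set.toFinite B).mem_toFinset).mpr hb2)
              have h0 : G.dist w b2 ≠ 0 := fun h =>
                hb12 ((hG.dist_eq_zero_iff).mp h).symm
              omega
            · have h6 : G.dist w b1 ≤ sEcc G (Set.toFinite B).toFinset w :=
                Finset.le_sup (f := fun x => G.dist w x)
                  (((Set.toFinite B).mem_toFinset).mpr hb1)
              have h0 : G.dist w b1 ≠ 0 := fun h => hne ((hG.dist_eq_zero_iff).mp h)
              omega
        have heccOut : ∀ w, w ∉ B → 2 ≤ sEcc G (Set.toFinite B).toFinset w := by
          intro w hw
          by_contra h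
          push_neg at h
          have hadjall : ∀ x ∈ B, G.Adj w x := by
            intro x hx
            have hd : G.dist w x ≤ 1 := by
              have h6 : G.dist w x ≤ sEcc G (Set.toFinite B).toFinset w :=
                Finset.le_sup (f := fun x => G.dist w x)
                  (((Set.toFinite B).mem_toFinset).mpr hx)
              omega
            have hwx : w ≠ x := fun hh => hw (hh ▸ hx)
            have h0 : G.dist w x ≠ 0 := fun hh => hwx ((hG.dist_eq_zero_iff).mp hh)
            exact SimpleGraph.dist_eq_one_iff_adj.mp (by omega)
          have hcut : IsCutFree G (B ∪ {w}) := by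
            refine cutFree_of_complete (⟨b1, Set.mem_union_left _ hb1⟩) ?_
            rintro a (ha | ha) b (hb | hb) hab
            · exact hcompl a ha b hb hab
            · rw [Set.mem_singleton_iff] at hb; subst hb
              exact (hadjall a ha).symm
            · rw [Set.mem_singleton_iff] at ha; subst ha
              exact hadjall b hb
            · rw [Set.mem_singleton_iff] at ha hb; exact absurd (ha.trans hb.symm) hab
          have := hB.2 (B ∪ {w}) Set.subset_union_left hcut
          exact hw (this ▸ Set.mem_union_right B rfl)
        ext w
        simp only [sCenter, Set.mem_setOf_eq]
        constructor
        · intro hwc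
          by_contra hwB
          have h1 := heccOut w hwB
          have h2 := hwc b1
          rw [heccB b1 hb1] at h2
          omega
        · intro hwB y
          rw [heccB w hwB]
          by_cases hyB : y ∈ B
          · rw [heccB y hyB]
          · have := heccOut y hyB; omega
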